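/- For all y > 0, we have (h_1^{-1}(y))² < y + y², where h_1(x) = x·tanh(x) on (0, ∞). -/
import Mathlib


/-- For all `y > 0`, `(h₁⁻¹ y)² < y + y²`, where `h₁(x) = x·tanh x` on `(0, ∞)`. -/
theorem h1inv_sq_upper (hinv : ℝ → ℝ)
    (h_left : ∀ x > (0:ℝ), hinv (x * Real.tanh x) = x)
    (h_right : ∀ y ∈ Set.Ioi (0:ℝ),
      hinv y > 0 ∧ hinv y * Real.tanh (hinv y) = y) :
    ∀ y > (0:ℝ), (hinv y) ^ 2 < y + y ^ 2 := by
  intro y hy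
  obtain ⟨hx, hxy⟩ := h_right y hy
  set x := hinv y with hxdef
  rw [← hxy, Real.tanh_eq_sinh_div_cosh]
  have hcpos : 0 < Real.cosh x := Real.cosh_pos x
  have hc : 1 ≤ Real.cosh x := Real.one_le_cosh x
  have hs : x < Real.sinh x := Real.self_lt_sinh_iff.mpr hx
  have hid : Real.cosh x ^ 2 - Real.sinh x ^ 2 = 1 := Real.cosh_sq_sub_sinh_sq x
  have hkey : x < Real.sinh x * Real.cosh x := by nlinarith
  have h2 : x * (Real.sinh x / Real.cosh x) = x * Real.sinh x / Real.cosh x := by ring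
  rw [h2, div_pow, div_add_div _ _ (ne_of_gt hcpos) (by positivity),
    lt_div_iff₀ (by positivity)]
  have h3 : x * (x * Real.cosh x) < Real.sinh x * Real.cosh x * (x * Real.cosh x) := by
    exact mul_lt_mul_of_pos_right hkey (mul_pos hx hcpos)
  nlinarith [h3, mul_pos (mul_pos hx hx) hcpos, sq_nonneg (Real.sinh x)]
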